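/- For all τ > 0 and all real x, z, the inequality f_τ(z) ≤ f_τ(x) + (τ²/(2·max(x², τ²)))·(z² − x²) holds, where f_τ(t) = t²/2 for |t| ≤ τ and f_τ(t) = (τ²/2)·log(e·t²/τ²) for |t| > τ. -/

import Mathlib

/-- The smoothed-logarithm function `f_τ`. -/
noncomputable def fSmooth (τ t : ℝ) : ℝ :=
  if |t| ≤ τ then t ^ 2 / 2 else (τ ^ 2 / 2) * Real.log (Real.exp 1 * t ^ 2 / τ ^ 2)

lemma log_e_sq (τ t : ℝ) (hτ : 0 < τ) (ht : ¬ |t| ≤ τ) :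
    Real.log (Real.exp 1 * t ^ 2 / τ ^ 2) = 1 + Real.log (t ^ 2) - Real.log (τ ^ 2) := by
  have htpos : 0 < |t| := hτ.trans (lt_of_not_ge ht)
  have ht2 : (0:ℝ) < t ^ 2 := by rw [← sq_abs]; positivity
  rw [Real.log_div (by positivity) (by positivity),
    Real.log_mul (Real.exp_ne_zero 1) (ne_of_gt ht2), Real.log_exp]

/-- quadratic majorization of the smoothed logarithm. -/
theorem fSmooth_quadratic_majorization (τ x z : ℝ) (hτ : 0 < τ) :
    fSmooth τ z ≤ fSmooth τ x + (τ ^ 2 / (2 * max (x ^ 2) (τ ^ 2))) * (z ^ 2 - x ^ 2) := by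
  have hT : (0:ℝ) < τ ^ 2 := by positivity
  have habs : ∀ t : ℝ, |t| ≤ τ ↔ t ^ 2 ≤ τ ^ 2 := by
    intro t
    rw [← sq_abs]
    exact (pow_le_pow_iff_left₀ (abs_nonneg t) hτ.le (by norm_num)).symm
  unfold fSmooth
  by_cases hx : |x| ≤ τ
  · have hxT : x ^ 2 ≤ τ ^ 2 := (habs x).mp hx
    rw [if_pos hx, max_eq_right hxT]
    by_cases hz : |z| ≤ τ
    · rw [if_pos hz]
      have h2 : τ ^ 2 / (2 * τ ^ 2) = 1 / 2 := by field_simp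
      rw [h2]
      linarith
    · rw [if_neg hz, log_e_sq τ z hτ hz]
      have hzT : τ ^ 2 < z ^ 2 := lt_of_not_ge fun h => hz ((habs z).mpr h)
      have hlog : Real.log (z ^ 2) - Real.log (τ ^ 2) ≤ z ^ 2 / τ ^ 2 - 1 := by
        rw [← Real.log_div (ne_of_gt (hT.trans hzT)) (ne_of_gt hT)]
        exact Real.log_le_sub_one_of_pos (div_pos (hT.trans hzT) hT)
      have h2 : τ ^ 2 / (2 * τ ^ 2) = 1 / 2 := by field_simp
      rw [h2]
      have := mul_le_mul_of_nonneg_left hlog (le_of_lt (by positivity : (0:ℝ) < τ ^ 2 / 2))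
      have h3 : τ ^ 2 / 2 * (z ^ 2 / τ ^ 2 - 1) = z ^ 2 / 2 - τ ^ 2 / 2 := by field_simp
      nlinarith
  · have hxT : τ ^ 2 < x ^ 2 := lt_of_not_ge fun h => hx ((habs x).mpr h)
    have hx0 : (0:ℝ) < x ^ 2 := lt_trans hT hxT
    rw [if_neg hx, max_eq_left hxT.le, log_e_sq τ x hτ hx]
    by_cases hz : |z| ≤ τ
    · have hzT : z ^ 2 ≤ τ ^ 2 := (habs z).mp hz
      rw [if_pos hz]
      -- need: z²/2 ≤ (τ²/2)(1 + log x² − log τ²) + (τ²/(2x²))(z² − x²)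
      have hlog : Real.log (τ ^ 2) - Real.log (x ^ 2) ≤ τ ^ 2 / x ^ 2 - 1 := by
        rw [← Real.log_div (ne_of_gt hT) (ne_of_gt hx0)]
        exact Real.log_le_sub_one_of_pos (by positivity)
      have key : 1 - τ ^ 2 / x ^ 2 ≤ Real.log (x ^ 2) - Real.log (τ ^ 2) := by linarith
      have h1 : τ ^ 2 / 2 * (1 - τ ^ 2 / x ^ 2) ≤ τ ^ 2 / 2 * (Real.log (x ^ 2) - Real.log (τ ^ 2)) :=
        mul_le_mul_of_nonneg_left key (by positivity)
      have h2 : τ ^ 2 / (2 * x ^ 2) * (z ^ 2 - x ^ 2) = τ ^ 2 * (z ^ 2 - x ^ 2) / (2 * x ^ 2) := by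
        ring
      have hnum : 0 ≤ (τ ^ 2 - z ^ 2) * (x ^ 2 - τ ^ 2) / (2 * x ^ 2) :=
        div_nonneg (mul_nonneg (by linarith) (by linarith)) (by positivity)
      have hid : τ ^ 2 / 2 * (1 + (1 - τ ^ 2 / x ^ 2)) + τ ^ 2 / (2 * x ^ 2) * (z ^ 2 - x ^ 2)
          - z ^ 2 / 2 = (τ ^ 2 - z ^ 2) * (x ^ 2 - τ ^ 2) / (2 * x ^ 2) := by
        have hxne : x ≠ 0 := fun h => by simp [h] at hx0
        field_simp
        ring
      have h3 : z ^ 2 / 2 ≤ τ ^ 2 / 2 * (1 + (1 - τ ^ 2 / x ^ 2))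
          + τ ^ 2 / (2 * x ^ 2) * (z ^ 2 - x ^ 2) := by linarith
      calc z ^ 2 / 2 ≤ τ ^ 2 / 2 * (1 + (1 - τ ^ 2 / x ^ 2))
            + τ ^ 2 / (2 * x ^ 2) * (z ^ 2 - x ^ 2) := h3
        _ ≤ τ ^ 2 / 2 * (1 + (Real.log (x ^ 2) - Real.log (τ ^ 2)))
            + τ ^ 2 / (2 * x ^ 2) * (z ^ 2 - x ^ 2) := by nlinarith
        _ = τ ^ 2 / 2 * (1 + Real.log (x ^ 2) - Real.log (τ ^ 2))
            + τ ^ 2 / (2 * x ^ 2) * (z ^ 2 - x ^ 2) := by ring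
    · rw [if_neg hz, log_e_sq τ z hτ hz]
      have hz0 : (0:ℝ) < z ^ 2 := lt_trans hT (lt_of_not_ge fun h => hz ((habs z).mpr h))
      have hlog : Real.log (z ^ 2) - Real.log (x ^ 2) ≤ z ^ 2 / x ^ 2 - 1 := by
        rw [← Real.log_div (ne_of_gt hz0) (ne_of_gt hx0)]
        exact Real.log_le_sub_one_of_pos (by positivity)
      have h1 : τ ^ 2 / 2 * (Real.log (z ^ 2) - Real.log (x ^ 2))
          ≤ τ ^ 2 / 2 * (z ^ 2 / x ^ 2 - 1) := mul_le_mul_of_nonneg_left hlog (by positivity)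
      have h2 : τ ^ 2 / 2 * (z ^ 2 / x ^ 2 - 1) = τ ^ 2 / (2 * x ^ 2) * (z ^ 2 - x ^ 2) := by
        field_simp
        rw [sub_div, div_self (ne_of_gt hx0)]
      nlinarith
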